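/- Black-Scholes admissibility: with constants σ > 0, r, δ, p(λ) as above, and s > 0: if 2(r-δ) < σ², then p(λ) > 0 for all λ ≤ λ̄ = (1/2)(σ/2 - (r-δ)/σ)² + r; if 2(r-δ) ≥ σ², then p(λ) > 0 if and only if λ < r. -/

import Mathlib

open Set

/-- Black–Scholes admissibility: if `2(r-δ) < σ²` then `p(λ) > 0` for all
`λ ≤ λ̄`; if `2(r-δ) ≥ σ²` then `p(λ) > 0` iff `λ < r`. -/
theorem black_scholes_admissible
    (σ r δ : ℝ) (hσ : 0 < σ)
    (p : ℝ → ℝ)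
    (hp : ∀ lam, p lam = 1/2 - (r - δ)/σ^2 +
      Real.sqrt ((1/2 - (r - δ)/σ^2)^2 + 2*(r - lam)/σ^2)) :
    (2*(r - δ) < σ^2 →
      ∀ lam ≤ (1/2) * (σ/2 - (r - δ)/σ)^2 + r, 0 < p lam) ∧
    (σ^2 ≤ 2*(r - δ) →
      ∀ lam ≤ (1/2) * (σ/2 - (r - δ)/σ)^2 + r, (0 < p lam ↔ lam < r)) := by
  have hσ2 : (0:ℝ) < σ^2 := by positivity
  set a : ℝ := 1/2 - (r - δ)/σ^2 with ha
  clear_value a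
  have hbar : (1/2) * (σ/2 - (r - δ)/σ)^2 = σ^2 * a^2 / 2 := by
    rw [ha]; field_simp
  constructor
  · intro h lam _
    have haPos : 0 < a := by
      rw [ha]; have : (r - δ)/σ^2 < 1/2 := by rw [div_lt_iff₀ hσ2]; linarith
      linarith
    rw [hp lam]
    have := Real.sqrt_nonneg (a^2 + 2*(r - lam)/σ^2)
    linarith
  · intro h lam hlam
    have haNeg : a ≤ 0 := by
      rw [ha]; have : 1/2 ≤ (r - δ)/σ^2 := by rw [le_div_iff₀ hσ2]; linarith
      linarith
    rw [hbar] at hlam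
    have hD : 0 ≤ a^2 + 2*(r - lam)/σ^2 := by
      have : -(a^2) ≤ 2*(r - lam)/σ^2 := by
        rw [le_div_iff₀ hσ2]; nlinarith
      linarith
    rw [hp lam]
    constructor
    · intro hpos
      have hlt : -a < Real.sqrt (a^2 + 2*(r - lam)/σ^2) := by linarith
      have h2 : a^2 < a^2 + 2*(r - lam)/σ^2 := by
        have hs := Real.sq_sqrt hD
        nlinarith [Real.sqrt_nonneg (a^2 + 2*(r - lam)/σ^2)]
      have : 0 < 2*(r - lam)/σ^2 := by linarith
      rw [div_pos_iff] at this
      rcases this with ⟨h1, _⟩ | ⟨_, h2⟩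
      · linarith
      · linarith
    · intro hlt
      have h2 : a^2 < a^2 + 2*(r - lam)/σ^2 := by
        have : 0 < 2*(r - lam)/σ^2 := div_pos (by linarith) hσ2
        linarith
      have hs : Real.sqrt (a^2) < Real.sqrt (a^2 + 2*(r - lam)/σ^2) :=
        Real.sqrt_lt_sqrt (by positivity) h2
      rw [Real.sqrt_sq_eq_abs, abs_of_nonpos haNeg] at hs
      linarith
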